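/- Let A ∈ ℝ^{n×n} be normal with r > 0 real eigenvalues (counted in a real Schur decomposition where Λ sin Θ has nonzero diagonal entries). For every V ∈ ℝ^{n×r} with orthonormal columns satisfying skew(A) V = 0, the matrix H := Vᵀ A V is symmetric and A V = V H. -/

import Mathlib

open Matrix

theorem real_eigenblock_symmetric {p r : ℕ} (hr : 0 < r)
    (lam theta : Fin p → ℝ) (breve : Fin r → ℝ)
    (hls : ∀ j, lam j * Real.sin (theta j) ≠ 0)
    (Q : Matrix ((Fin p ⊕ Fin r) ⊕ Fin p) ((Fin p ⊕ Fin r) ⊕ Fin p) ℝ)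
    (hQ₁ : Qᵀ * Q = 1) (hQ₂ : Q * Qᵀ = 1)
    (A : Matrix ((Fin p ⊕ Fin r) ⊕ Fin p) ((Fin p ⊕ Fin r) ⊕ Fin p) ℝ)
    (hA : A =
      Q * fromBlocks
        (fromBlocks (diagonal fun j => lam j * Real.cos (theta j)) 0 0 (diagonal breve))
        (fromRows (-(diagonal fun j => lam j * Real.sin (theta j))) 0)
        (fromCols (diagonal fun j => lam j * Real.sin (theta j)) 0)
        (diagonal fun j => lam j * Real.cos (theta j)) * Qᵀ)
    (V : Matrix ((Fin p ⊕ Fin r) ⊕ Fin p) (Fin r) ℝ)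
    (hV : Vᵀ * V = 1)
    (hskew : ((1/2 : ℝ) • (A - Aᵀ)) * V = 0) :
    (Vᵀ * A * V)ᵀ = Vᵀ * A * V ∧ A * V = V * (Vᵀ * A * V) := by
  classical
  set D : Matrix (Fin p) (Fin p) ℝ := diagonal (fun j => lam j * Real.sin (theta j)) with hD
  set C : Matrix (Fin p) (Fin p) ℝ := diagonal (fun j => lam j * Real.cos (theta j)) with hC
  set S : Matrix ((Fin p ⊕ Fin r) ⊕ Fin p) ((Fin p ⊕ Fin r) ⊕ Fin p) ℝ :=
    fromBlocks (fromBlocks C 0 0 (diagonal breve)) (fromRows (-D) 0) (fromCols D 0) C with hS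
  set W : Matrix ((Fin p ⊕ Fin r) ⊕ Fin p) (Fin r) ℝ := Qᵀ * V with hWdef
  have hQW : Q * W = V := by rw [hWdef, ← Matrix.mul_assoc, hQ₂, Matrix.one_mul]
  have hWW : Wᵀ * W = 1 := by
    rw [hWdef, transpose_mul, transpose_transpose, Matrix.mul_assoc, ← Matrix.mul_assoc Q, hQ₂, Matrix.one_mul, hV]
  -- skew condition transferred to S and W
  have hAV : (A - Aᵀ) * V = 0 := by
    have h2 : (2:ℝ) • (((1/2 : ℝ) • (A - Aᵀ)) * V) = 0 := by rw [hskew]; simp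
    rw [← Matrix.smul_mul, smul_smul] at h2
    norm_num at h2
    exact h2
  have hSW0 : (S - Sᵀ) * W = 0 := by
    have hAT : Aᵀ = Q * Sᵀ * Qᵀ := by
      rw [hA]; simp [transpose_mul, mul_assoc]
    have h1 : Q * ((S - Sᵀ) * W) = 0 := by
      calc Q * ((S - Sᵀ) * W) = (Q * S * Qᵀ - Q * Sᵀ * Qᵀ) * V := by
            simp only [hWdef, Matrix.sub_mul, Matrix.mul_sub, Matrix.mul_assoc]
        _ = (A - Aᵀ) * V := by rw [← hA, ← hAT]
        _ = 0 := hAV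
    have := congrArg (fun M => Qᵀ * M) h1
    simpa [← Matrix.mul_assoc, hQ₁] using this
  -- extract blockwise vanishing of W
  have hW1 : ∀ (k : Fin p) (j : Fin r), W (Sum.inl (Sum.inl k)) j = 0 := by
    intro k j
    have h := congrFun (congrFun hSW0 (Sum.inr k)) j
    simp only [mul_apply, Matrix.sub_apply, transpose_apply, Pi.zero_apply, Matrix.zero_apply,
      Fintype.sum_sum_type, hS, fromBlocks_apply₂₁, fromBlocks_apply₂₂,
      fromBlocks_apply₁₂, fromBlocks_apply₁₁, fromCols_apply_inl, fromCols_apply_inr,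
      fromRows_apply_inl, fromRows_apply_inr, Matrix.neg_apply, Matrix.zero_apply] at h
    simp only [hD, hC, diagonal_apply, Finset.sum_ite_eq', Finset.mem_univ, if_true] at h
    simp only [sub_neg_eq_add, sub_self, zero_mul, Finset.sum_const_zero, add_zero, add_mul,
      Finset.sum_add_distrib, ite_mul, zero_mul, Finset.sum_ite_eq, Finset.sum_ite_eq',
      Finset.mem_univ, if_true, zero_add] at h
    have hz : (∑ x : Fin p, ((if k = x then lam k * Real.cos (theta k) else 0)
        - if x = k then lam x * Real.cos (theta x) else 0) * W (Sum.inr x) j) = 0 :=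
      Finset.sum_eq_zero (fun x _ => by
        by_cases hx : x = k
        · subst hx; simp
        · simp [hx, Ne.symm hx])
    rw [hz, add_zero] at h
    have h2 : lam k * Real.sin (theta k) * W (Sum.inl (Sum.inl k)) j = 0 := by linarith
    rcases mul_eq_zero.mp h2 with h3 | h3
    · exact absurd h3 (hls k)
    · exact h3
  have hW2 : ∀ (k : Fin p) (j : Fin r), W (Sum.inr k) j = 0 := by
    intro k j
    have h := congrFun (congrFun hSW0 (Sum.inl (Sum.inl k))) j
    simp only [mul_apply, Matrix.sub_apply, transpose_apply, Pi.zero_apply, Matrix.zero_apply,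
      Fintype.sum_sum_type, hS, fromBlocks_apply₂₁, fromBlocks_apply₂₂,
      fromBlocks_apply₁₂, fromBlocks_apply₁₁, fromCols_apply_inl, fromCols_apply_inr,
      fromRows_apply_inl, fromRows_apply_inr, Matrix.neg_apply, Matrix.zero_apply] at h
    simp only [hD, hC, diagonal_apply, Finset.sum_ite_eq', Finset.mem_univ, if_true] at h
    simp only [sub_neg_eq_add, sub_self, zero_mul, Finset.sum_const_zero, add_zero, add_mul,
      Finset.sum_add_distrib, ite_mul, zero_mul, Finset.sum_ite_eq, Finset.sum_ite_eq',
      Finset.mem_univ, if_true, zero_add, neg_mul, Finset.sum_neg_distrib] at h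
    have hz : (∑ x : Fin p, ((if k = x then lam k * Real.cos (theta k) else 0)
        - if x = k then lam x * Real.cos (theta x) else 0) * W (Sum.inl (Sum.inl x)) j) = 0 :=
      Finset.sum_eq_zero (fun x _ => by
        by_cases hx : x = k
        · subst hx; simp
        · simp [hx, Ne.symm hx])
    rw [hz, zero_add] at h
    simp only [sub_eq_add_neg, add_mul, neg_mul, Finset.sum_add_distrib, Finset.sum_neg_distrib,
      ite_mul, zero_mul, Finset.sum_ite_eq, Finset.sum_ite_eq', Finset.mem_univ, if_true,
      neg_zero, Finset.sum_const_zero] at h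
    have h2 : lam k * Real.sin (theta k) * W (Sum.inr k) j = 0 := by linarith
    rcases mul_eq_zero.mp h2 with h3 | h3
    · exact absurd h3 (hls k)
    · exact h3
  set B : Matrix (Fin r) (Fin r) ℝ := Matrix.of (fun i j => W (Sum.inl (Sum.inr i)) j) with hB
  have hBtB : Bᵀ * B = 1 := by
    ext i j
    have h := congrFun (congrFun hWW i) j
    simp only [mul_apply, transpose_apply, Fintype.sum_sum_type, hW1, hW2, zero_mul,
      Finset.sum_const_zero, add_zero, zero_add] at h
    simpa [hB, mul_apply, transpose_apply] using h
  have hBBt : B * Bᵀ = 1 := mul_eq_one_comm.mp hBtB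
  set M : Matrix (Fin r) (Fin r) ℝ := Bᵀ * (diagonal breve * B) with hM
  have hBM : B * M = diagonal breve * B := by
    rw [hM, ← Matrix.mul_assoc, hBBt, Matrix.one_mul]
  have hSW : S * W = W * M := by
    ext l j
    cases l with
    | inl l' =>
      cases l' with
      | inl k =>
        simp [mul_apply, Fintype.sum_sum_type, hS, hW1, hW2]
      | inr i =>
        have h1 : (S * W) (Sum.inl (Sum.inr i)) j = breve i * B i j := by
          simp [mul_apply, Fintype.sum_sum_type, hS, hW2, hB, diagonal_apply,
            Finset.sum_ite_eq, Finset.sum_ite_eq']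
        have h2 : (W * M) (Sum.inl (Sum.inr i)) j = (B * M) i j := by
          simp [mul_apply, hB]
        rw [h1, h2, hBM]
        simp [mul_apply, diagonal_apply, ite_mul, Finset.sum_ite_eq, hB]
    | inr k =>
      simp [mul_apply, Fintype.sum_sum_type, hS, hW1, hW2]
  have hH : Vᵀ * A * V = M := by
    have h1 : Vᵀ * A * V = Wᵀ * (S * W) := by
      rw [hA, hWdef]
      simp [transpose_mul, Matrix.mul_assoc]
    rw [h1, hSW, ← Matrix.mul_assoc, hWW, Matrix.one_mul]
  constructor
  · rw [hH, hM]
    simp [transpose_mul, Matrix.mul_assoc]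
  · rw [hH, hA]
    simp only [Matrix.mul_assoc]
    rw [← hWdef, hSW, ← Matrix.mul_assoc, hQW]
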